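/- arXiv:2003.04108 — 3 statements merged into one kernel-verified Lean document; each statement's English description precedes it below -/
import Mathlib

section
/- For all policies π and π' of a finite discounted MDP, D_TV(d^{π'}_ρ ‖ d^π_ρ) ≤ (2γ/(1−γ)) · ∑_{s∈S} d^π_ρ(s) · D_TV(π'(·|s) ‖ π(·|s)). -/
open Finset

noncomputable section

variable {S A : Type*} [Fintype S] [Fintype A]

/-- The t-step state distribution of policy `π` started from `ρ`. -/
def stateDist (P : S → A → S → ℝ) (π : S → A → ℝ) (ρ : S → ℝ) : ℕ → S → ℝ
  | 0 => ρ
  | t + 1 => fun s' => ∑ s, ∑ a, stateDist P π ρ t s * π s a * P s a s'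

/-- The discounted state visitation distribution `d^π_ρ`. -/
def dvisit (P : S → A → S → ℝ) (π : S → A → ℝ) (ρ : S → ℝ) (γ : ℝ) (s : S) : ℝ :=
  (1 - γ) * ∑' t : ℕ, γ ^ t * stateDist P π ρ t s

/-- Total variation distance between real-valued functions on a finite set. -/
def dTV {X : Type*} [Fintype X] (p q : X → ℝ) : ℝ := ∑ x, |p x - q x|

lemma sd_nonneg (P : S → A → S → ℝ) (π : S → A → ℝ) (ρ : S → ℝ)
    (hP0 : ∀ s a s', 0 ≤ P s a s') (hρ0 : ∀ s, 0 ≤ ρ s) (hπ0 : ∀ s a, 0 ≤ π s a) :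
    ∀ t s, 0 ≤ stateDist P π ρ t s
  | 0, s => hρ0 s
  | (t+1), s' => Finset.sum_nonneg fun s _ => Finset.sum_nonneg fun a _ =>
      mul_nonneg (mul_nonneg (sd_nonneg P π ρ hP0 hρ0 hπ0 t s) (hπ0 s a)) (hP0 s a s')

lemma sd_sum (P : S → A → S → ℝ) (π : S → A → ℝ) (ρ : S → ℝ)
    (hP1 : ∀ s a, ∑ s', P s a s' = 1) (hρ1 : ∑ s, ρ s = 1)
    (hπ1 : ∀ s, ∑ a, π s a = 1) :
    ∀ t, ∑ s, stateDist P π ρ t s = 1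
  | 0 => hρ1
  | (t+1) => by
    show (∑ s' : S, ∑ s, ∑ a, stateDist P π ρ t s * π s a * P s a s') = 1
    rw [Finset.sum_comm]
    have h : ∀ s : S, (∑ s' : S, ∑ a, stateDist P π ρ t s * π s a * P s a s')
        = stateDist P π ρ t s := by
      intro s
      rw [Finset.sum_comm]
      calc (∑ a, ∑ s' : S, stateDist P π ρ t s * π s a * P s a s')
          = ∑ a, stateDist P π ρ t s * π s a := by
            refine Finset.sum_congr rfl fun a _ => ?_
            rw [← Finset.mul_sum, hP1, mul_one]
        _ = stateDist P π ρ t s := by rw [← Finset.mul_sum, hπ1, mul_one]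
    simp only [h]
    exact sd_sum P π ρ hP1 hρ1 hπ1 t

lemma eps_rec (P : S → A → S → ℝ) (π π' : S → A → ℝ) (ρ : S → ℝ)
    (hP0 : ∀ s a s', 0 ≤ P s a s') (hP1 : ∀ s a, ∑ s', P s a s' = 1)
    (hρ0 : ∀ s, 0 ≤ ρ s)
    (hπ0 : ∀ s a, 0 ≤ π s a) (hπ'0 : ∀ s a, 0 ≤ π' s a)
    (hπ'1 : ∀ s, ∑ a, π' s a = 1) (t : ℕ) :
    ∑ s, |stateDist P π' ρ (t+1) s - stateDist P π ρ (t+1) s|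
      ≤ (∑ s, |stateDist P π' ρ t s - stateDist P π ρ t s|)
        + ∑ s, stateDist P π ρ t s * dTV (π' s) (π s) := by
  set d := stateDist P π ρ t with hd
  set d' := stateDist P π' ρ t with hd'
  have key : ∀ s a, |d' s * π' s a - d s * π s a|
      ≤ |d' s - d s| * π' s a + d s * |π' s a - π s a| := by
    intro s a
    have : d' s * π' s a - d s * π s a
        = (d' s - d s) * π' s a + d s * (π' s a - π s a) := by ring
    rw [this]
    calc |(d' s - d s) * π' s a + d s * (π' s a - π s a)|
        ≤ |(d' s - d s) * π' s a| + |d s * (π' s a - π s a)| := abs_add_le _ _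
      _ = |d' s - d s| * π' s a + d s * |π' s a - π s a| := by
          rw [abs_mul, abs_mul, abs_of_nonneg (hπ'0 s a),
            abs_of_nonneg (sd_nonneg P π ρ hP0 hρ0 hπ0 t s)]
  calc ∑ s'' : S, |stateDist P π' ρ (t+1) s'' - stateDist P π ρ (t+1) s''|
      = ∑ s'' : S, |∑ s, ∑ a, (d' s * π' s a - d s * π s a) * P s a s''| := by
        refine Finset.sum_congr rfl fun s'' _ => ?_
        show |(∑ s, ∑ a, d' s * π' s a * P s a s'') - ∑ s, ∑ a, d s * π s a * P s a s''| = _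
        rw [← Finset.sum_sub_distrib]
        congr 1
        refine Finset.sum_congr rfl fun s _ => ?_
        rw [← Finset.sum_sub_distrib]
        refine Finset.sum_congr rfl fun a _ => ?_
        ring
    _ ≤ ∑ s'' : S, ∑ s, ∑ a, (|d' s - d s| * π' s a + d s * |π' s a - π s a|) * P s a s'' := by
        refine Finset.sum_le_sum fun s'' _ => ?_
        calc |∑ s, ∑ a, (d' s * π' s a - d s * π s a) * P s a s''|
            ≤ ∑ s, |∑ a, (d' s * π' s a - d s * π s a) * P s a s''| :=
              Finset.abs_sum_le_sum_abs _ _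
          _ ≤ ∑ s, ∑ a, |(d' s * π' s a - d s * π s a) * P s a s''| :=
              Finset.sum_le_sum fun s _ => Finset.abs_sum_le_sum_abs _ _
          _ ≤ ∑ s, ∑ a, (|d' s - d s| * π' s a + d s * |π' s a - π s a|) * P s a s'' := by
              refine Finset.sum_le_sum fun s _ => Finset.sum_le_sum fun a _ => ?_
              rw [abs_mul, abs_of_nonneg (hP0 s a s'')]
              exact mul_le_mul_of_nonneg_right (key s a) (hP0 s a s'')
    _ = ∑ s, ∑ a, (|d' s - d s| * π' s a + d s * |π' s a - π s a|) := by
        rw [Finset.sum_comm]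
        refine Finset.sum_congr rfl fun s _ => ?_
        rw [Finset.sum_comm]
        refine Finset.sum_congr rfl fun a _ => ?_
        rw [← Finset.mul_sum, hP1, mul_one]
    _ = (∑ s, |d' s - d s|) + ∑ s, d s * dTV (π' s) (π s) := by
        rw [← Finset.sum_add_distrib]
        refine Finset.sum_congr rfl fun s _ => ?_
        rw [Finset.sum_add_distrib, ← Finset.mul_sum, ← Finset.mul_sum, hπ'1, mul_one]
        rfl

lemma eps_bound (P : S → A → S → ℝ) (π π' : S → A → ℝ) (ρ : S → ℝ)
    (hP0 : ∀ s a s', 0 ≤ P s a s') (hP1 : ∀ s a, ∑ s', P s a s' = 1)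
    (hρ0 : ∀ s, 0 ≤ ρ s)
    (hπ0 : ∀ s a, 0 ≤ π s a) (hπ'0 : ∀ s a, 0 ≤ π' s a)
    (hπ'1 : ∀ s, ∑ a, π' s a = 1) :
    ∀ t, ∑ s, |stateDist P π' ρ t s - stateDist P π ρ t s|
      ≤ ∑ k ∈ Finset.range t, ∑ s, stateDist P π ρ k s * dTV (π' s) (π s)
  | 0 => by simp [stateDist]
  | (t+1) => by
    rw [Finset.sum_range_succ]
    exact le_trans (eps_rec P π π' ρ hP0 hP1 hρ0 hπ0 hπ'0 hπ'1 t)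
      (add_le_add (eps_bound P π π' ρ hP0 hP1 hρ0 hπ0 hπ'0 hπ'1 t) le_rfl)

/-- `D_TV(d^{π'}_ρ ‖ d^π_ρ) ≤ (2γ/(1−γ)) · E_{s ~ d^π_ρ}[ D_TV(π'(·|s) ‖ π(·|s)) ]`. -/
theorem visitation_tv_bound
    [Nonempty S] [Nonempty A]
    (P : S → A → S → ℝ) (γ : ℝ) (ρ : S → ℝ)
    (hγ0 : 0 ≤ γ) (hγ1 : γ < 1)
    (hP0 : ∀ s a s', 0 ≤ P s a s') (hP1 : ∀ s a, ∑ s', P s a s' = 1)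
    (hρ0 : ∀ s, 0 ≤ ρ s) (hρ1 : ∑ s, ρ s = 1)
    (π π' : S → A → ℝ)
    (hπ0 : ∀ s a, 0 ≤ π s a) (hπ1 : ∀ s, ∑ a, π s a = 1)
    (hπ'0 : ∀ s a, 0 ≤ π' s a) (hπ'1 : ∀ s, ∑ a, π' s a = 1) :
    dTV (dvisit P π' ρ γ) (dvisit P π ρ γ)
      ≤ (2 * γ / (1 - γ)) * ∑ s, dvisit P π ρ γ s * dTV (π' s) (π s) := by
  have h1γ : (0:ℝ) < 1 - γ := by linarith
  set c : S → ℝ := fun s => dTV (π' s) (π s) with hc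
  have hc0 : ∀ s, 0 ≤ c s := fun s => Finset.sum_nonneg fun a _ => abs_nonneg _
  have hc2 : ∀ s, c s ≤ 2 := by
    intro s
    calc c s ≤ ∑ a, (π' s a + π s a) := by
          refine Finset.sum_le_sum fun a _ => ?_
          have := abs_sub (π' s a) (π s a)
          rw [abs_of_nonneg (hπ'0 s a), abs_of_nonneg (hπ0 s a)] at this
          exact this
      _ = 2 := by rw [Finset.sum_add_distrib, hπ1, hπ'1]; norm_num
  set δ : ℕ → ℝ := fun k => ∑ s, stateDist P π ρ k s * c s with hδ
  have hδ0 : ∀ k, 0 ≤ δ k := fun k =>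
    Finset.sum_nonneg fun s _ => mul_nonneg (sd_nonneg P π ρ hP0 hρ0 hπ0 k s) (hc0 s)
  have hδ2 : ∀ k, δ k ≤ 2 := by
    intro k
    calc δ k ≤ ∑ s, stateDist P π ρ k s * 2 :=
          Finset.sum_le_sum fun s _ =>
            mul_le_mul_of_nonneg_left (hc2 s) (sd_nonneg P π ρ hP0 hρ0 hπ0 k s)
      _ = 2 := by rw [← Finset.sum_mul, sd_sum P π ρ hP1 hρ1 hπ1 k]; norm_num
  have hgeo : Summable (fun t : ℕ => γ ^ t) := summable_geometric_of_lt_one hγ0 hγ1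
  have hd1 : ∀ t s, stateDist P π ρ t s ≤ 1 := by
    intro t s
    calc stateDist P π ρ t s ≤ ∑ s', stateDist P π ρ t s' :=
          Finset.single_le_sum (fun s' _ => sd_nonneg P π ρ hP0 hρ0 hπ0 t s')
            (Finset.mem_univ s)
      _ = 1 := sd_sum P π ρ hP1 hρ1 hπ1 t
  have hd'1 : ∀ t s, stateDist P π' ρ t s ≤ 1 := by
    intro t s
    calc stateDist P π' ρ t s ≤ ∑ s', stateDist P π' ρ t s' :=
          Finset.single_le_sum (fun s' _ => sd_nonneg P π' ρ hP0 hρ0 hπ'0 t s')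
            (Finset.mem_univ s)
      _ = 1 := sd_sum P π' ρ hP1 hρ1 hπ'1 t
  have hsum : ∀ s, Summable (fun t => γ ^ t * stateDist P π ρ t s) := by
    intro s
    refine Summable.of_nonneg_of_le
      (fun t => mul_nonneg (pow_nonneg hγ0 t) (sd_nonneg P π ρ hP0 hρ0 hπ0 t s))
      (fun t => mul_le_of_le_one_right (pow_nonneg hγ0 t) (hd1 t s)) hgeo
  have hsum' : ∀ s, Summable (fun t => γ ^ t * stateDist P π' ρ t s) := by
    intro s
    refine Summable.of_nonneg_of_le
      (fun t => mul_nonneg (pow_nonneg hγ0 t) (sd_nonneg P π' ρ hP0 hρ0 hπ'0 t s))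
      (fun t => mul_le_of_le_one_right (pow_nonneg hγ0 t) (hd'1 t s)) hgeo
  have habs : ∀ s, Summable (fun t => γ ^ t * |stateDist P π' ρ t s - stateDist P π ρ t s|) := by
    intro s
    refine Summable.of_nonneg_of_le
      (fun t => mul_nonneg (pow_nonneg hγ0 t) (abs_nonneg _))
      (fun t => ?_) (hgeo.mul_left 2)
    have h2 : |stateDist P π' ρ t s - stateDist P π ρ t s| ≤ 2 := by
      have h1 := sd_nonneg P π ρ hP0 hρ0 hπ0 t s
      have h1' := sd_nonneg P π' ρ hP0 hρ0 hπ'0 t s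
      have h3 := hd1 t s
      have h3' := hd'1 t s
      rw [abs_le]; constructor <;> linarith
    calc γ ^ t * |stateDist P π' ρ t s - stateDist P π ρ t s|
        ≤ γ ^ t * 2 := mul_le_mul_of_nonneg_left h2 (pow_nonneg hγ0 t)
      _ = 2 * γ ^ t := mul_comm _ _
  have hδsum : Summable (fun k => γ ^ k * δ k) := by
    refine Summable.of_nonneg_of_le
      (fun k => mul_nonneg (pow_nonneg hγ0 k) (hδ0 k)) (fun k => ?_) (hgeo.mul_left 2)
    calc γ ^ k * δ k ≤ γ ^ k * 2 := mul_le_mul_of_nonneg_left (hδ2 k) (pow_nonneg hγ0 k)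
      _ = 2 * γ ^ k := mul_comm _ _
  -- Step A
  have stepA : dTV (dvisit P π' ρ γ) (dvisit P π ρ γ)
      ≤ (1 - γ) * ∑' t, γ ^ t * ∑ s, |stateDist P π' ρ t s - stateDist P π ρ t s| := by
    calc dTV (dvisit P π' ρ γ) (dvisit P π ρ γ)
        = ∑ s, |dvisit P π' ρ γ s - dvisit P π ρ γ s| := rfl
      _ ≤ ∑ s, (1 - γ) * ∑' t, γ ^ t * |stateDist P π' ρ t s - stateDist P π ρ t s| := by
          refine Finset.sum_le_sum fun s _ => ?_
          have e1 : dvisit P π' ρ γ s - dvisit P π ρ γ s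
              = (1 - γ) * ∑' t, (γ ^ t * stateDist P π' ρ t s - γ ^ t * stateDist P π ρ t s) := by
            rw [dvisit, dvisit, ← mul_sub, Summable.tsum_sub (hsum' s) (hsum s)]
          rw [e1, abs_mul, abs_of_nonneg (le_of_lt h1γ)]
          refine mul_le_mul_of_nonneg_left ?_ (le_of_lt h1γ)
          have hsummable : Summable (fun t =>
              ‖γ ^ t * stateDist P π' ρ t s - γ ^ t * stateDist P π ρ t s‖) := by
            refine (habs s).congr fun t => ?_
            rw [Real.norm_eq_abs, ← mul_sub, abs_mul, abs_of_nonneg (pow_nonneg hγ0 t)]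
          have := norm_tsum_le_tsum_norm hsummable
          rw [Real.norm_eq_abs] at this
          refine le_trans this (le_of_eq ?_)
          refine tsum_congr fun t => ?_
          rw [Real.norm_eq_abs, ← mul_sub, abs_mul, abs_of_nonneg (pow_nonneg hγ0 t)]
      _ = (1 - γ) * ∑ s, ∑' t, γ ^ t * |stateDist P π' ρ t s - stateDist P π ρ t s| := by
          rw [Finset.mul_sum]
      _ = (1 - γ) * ∑' t, ∑ s, γ ^ t * |stateDist P π' ρ t s - stateDist P π ρ t s| := by
          rw [Summable.tsum_finsetSum (fun s _ => habs s)]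
      _ = (1 - γ) * ∑' t, γ ^ t * ∑ s, |stateDist P π' ρ t s - stateDist P π ρ t s| := by
          congr 1
          exact tsum_congr fun t => (Finset.mul_sum _ _ _).symm
  -- Step B
  have stepB : (∑' t, γ ^ t * ∑ s, |stateDist P π' ρ t s - stateDist P π ρ t s|)
      ≤ (γ / (1 - γ)) * ∑' k, γ ^ k * δ k := by
    refine Real.tsum_le_of_sum_range_le
      (fun t => mul_nonneg (pow_nonneg hγ0 t)
        (Finset.sum_nonneg fun s _ => abs_nonneg _)) (fun N => ?_)
    calc ∑ t ∈ Finset.range N, γ ^ t * ∑ s, |stateDist P π' ρ t s - stateDist P π ρ t s|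
        ≤ ∑ t ∈ Finset.range N, γ ^ t * ∑ k ∈ Finset.range t, δ k := by
          refine Finset.sum_le_sum fun t _ => mul_le_mul_of_nonneg_left ?_ (pow_nonneg hγ0 t)
          exact eps_bound P π π' ρ hP0 hP1 hρ0 hπ0 hπ'0 hπ'1 t
      _ = ∑ t ∈ Finset.range N, ∑ k ∈ Finset.range N, (if k < t then γ ^ t * δ k else 0) := by
          refine Finset.sum_congr rfl fun t ht => ?_
          have htN := Finset.mem_range.mp ht
          rw [Finset.mul_sum]
          symm
          calc ∑ k ∈ Finset.range N, (if k < t then γ ^ t * δ k else 0)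
              = ∑ k ∈ (Finset.range N).filter (fun k => k < t), γ ^ t * δ k :=
                (Finset.sum_filter _ _).symm
            _ = ∑ k ∈ Finset.range t, γ ^ t * δ k := by
                congr 1
                ext k
                simp only [Finset.mem_filter, Finset.mem_range]
                omega
      _ = ∑ k ∈ Finset.range N, ∑ t ∈ Finset.range N, (if k < t then γ ^ t * δ k else 0) :=
          Finset.sum_comm
      _ ≤ ∑ k ∈ Finset.range N, δ k * (γ ^ (k + 1) * (1 - γ)⁻¹) := by
          refine Finset.sum_le_sum fun k _ => ?_
          have e : ∑ t ∈ Finset.range N, (if k < t then γ ^ t * δ k else 0)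
              = δ k * ∑ t ∈ Finset.range N, (if k < t then γ ^ t else 0) := by
            rw [Finset.mul_sum]
            refine Finset.sum_congr rfl fun t _ => ?_
            split <;> ring
          rw [e]
          refine mul_le_mul_of_nonneg_left ?_ (hδ0 k)
          have e2 : ∑ t ∈ Finset.range N, (if k < t then γ ^ t else 0)
              = ∑ t ∈ Finset.Ico (k + 1) N, γ ^ t := by
            rw [← Finset.sum_filter]
            congr 1
            ext t
            simp only [Finset.mem_filter, Finset.mem_range, Finset.mem_Ico]
            omega
          rw [e2, Finset.sum_Ico_eq_sum_range]
          calc ∑ j ∈ Finset.range (N - (k + 1)), γ ^ (k + 1 + j)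
              = γ ^ (k + 1) * ∑ j ∈ Finset.range (N - (k + 1)), γ ^ j := by
                rw [Finset.mul_sum]
                exact Finset.sum_congr rfl fun j _ => pow_add γ (k + 1) j
            _ ≤ γ ^ (k + 1) * (1 - γ)⁻¹ := by
                refine mul_le_mul_of_nonneg_left ?_ (pow_nonneg hγ0 _)
                calc ∑ j ∈ Finset.range (N - (k + 1)), γ ^ j
                    ≤ ∑' j : ℕ, γ ^ j := Summable.sum_le_tsum _ (fun j _ => pow_nonneg hγ0 j) hgeo
                  _ = (1 - γ)⁻¹ := tsum_geometric_of_lt_one hγ0 hγ1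
      _ = (γ / (1 - γ)) * ∑ k ∈ Finset.range N, γ ^ k * δ k := by
          rw [Finset.mul_sum]
          refine Finset.sum_congr rfl fun k _ => ?_
          rw [pow_succ]
          field_simp
      _ ≤ (γ / (1 - γ)) * ∑' k, γ ^ k * δ k := by
          refine mul_le_mul_of_nonneg_left ?_ (by positivity)
          exact Summable.sum_le_tsum _ (fun k _ => mul_nonneg (pow_nonneg hγ0 k) (hδ0 k)) hδsum
  -- Step C
  have stepC : (∑ s, dvisit P π ρ γ s * c s) = (1 - γ) * ∑' k, γ ^ k * δ k := by
    calc ∑ s, dvisit P π ρ γ s * c s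
        = ∑ s, (1 - γ) * ∑' t, γ ^ t * stateDist P π ρ t s * c s := by
          refine Finset.sum_congr rfl fun s _ => ?_
          rw [dvisit, mul_assoc, ← tsum_mul_right]
      _ = (1 - γ) * ∑ s, ∑' t, γ ^ t * stateDist P π ρ t s * c s := by rw [Finset.mul_sum]
      _ = (1 - γ) * ∑' t, ∑ s, γ ^ t * stateDist P π ρ t s * c s := by
          rw [Summable.tsum_finsetSum (fun s _ => (hsum s).mul_right (c s))]
      _ = (1 - γ) * ∑' k, γ ^ k * δ k := by
          congr 1
          refine tsum_congr fun t => ?_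
          rw [hδ, Finset.mul_sum]
          exact Finset.sum_congr rfl fun s _ => by ring
  have hT0 : 0 ≤ ∑' k, γ ^ k * δ k :=
    tsum_nonneg fun k => mul_nonneg (pow_nonneg hγ0 k) (hδ0 k)
  calc dTV (dvisit P π' ρ γ) (dvisit P π ρ γ)
      ≤ (1 - γ) * ∑' t, γ ^ t * ∑ s, |stateDist P π' ρ t s - stateDist P π ρ t s| := stepA
    _ ≤ (1 - γ) * ((γ / (1 - γ)) * ∑' k, γ ^ k * δ k) :=
        mul_le_mul_of_nonneg_left stepB (le_of_lt h1γ)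
    _ = γ * ∑' k, γ ^ k * δ k := by field_simp
    _ ≤ (2 * γ / (1 - γ)) * ((1 - γ) * ∑' k, γ ^ k * δ k) := by
        have e : (2 * γ / (1 - γ)) * ((1 - γ) * ∑' k, γ ^ k * δ k)
            = 2 * γ * ∑' k, γ ^ k * δ k := by field_simp
        rw [e]
        have := mul_nonneg hγ0 hT0
        nlinarith
    _ = (2 * γ / (1 - γ)) * ∑ s, dvisit P π ρ γ s * c s := by rw [stepC]
end
end

section
/- For all policies π and π' of a finite discounted MDP, J(π') ≥ L_π(π') − (2γ·ε^π/(1−γ)) · ∑_{s∈S} d^π_ρ(s) · D_TV(π'(·|s) ‖ π(·|s)), where ε^π = max_{s∈S} |∑_{a∈A} π'(a|s) A^π(s,a)|. -/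
open Finset

noncomputable section

variable {S A : Type*} [Fintype S] [Fintype A]

lemma summable_geom_bound {γ : ℝ} (hγ0 : 0 ≤ γ) (hγ1 : γ < 1) (f : ℕ → ℝ) (M : ℝ)
    (hf : ∀ t, |f t| ≤ M * γ ^ t) : Summable f :=
  Summable.of_norm_bounded ((summable_geometric_of_lt_one hγ0 hγ1).mul_left M) hf

lemma telescope_tsum (a : ℕ → ℝ) (h0 : Filter.Tendsto a Filter.atTop (nhds 0))
    (hs : Summable fun t => a t - a (t + 1)) : ∑' t, (a t - a (t + 1)) = a 0 := by
  have h1 := hs.hasSum.tendsto_sum_nat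
  have h2 : Filter.Tendsto (fun n => ∑ i ∈ Finset.range n, (a i - a (i + 1)))
      Filter.atTop (nhds (a 0)) := by
    simp only [Finset.sum_range_sub']
    simpa using Filter.Tendsto.const_sub (a 0) h0
  exact tendsto_nhds_unique h1 h2

section Aux

variable (P : S → A → S → ℝ) (ρ : S → ℝ) (μ : S → A → ℝ)
variable (hP0 : ∀ s a s', 0 ≤ P s a s') (hP1 : ∀ s a, ∑ s', P s a s' = 1)
variable (hρ0 : ∀ s, 0 ≤ ρ s) (hρ1 : ∑ s, ρ s = 1)
variable (hμ0 : ∀ s a, 0 ≤ μ s a) (hμ1 : ∀ s, ∑ a, μ s a = 1)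

include hP0 hρ0 hμ0 in
lemma sd_nonneg_s4 : ∀ t s, 0 ≤ stateDist P μ ρ t s := by
  intro t
  induction t with
  | zero => exact hρ0
  | succ t ih =>
    intro s'
    exact Finset.sum_nonneg fun s _ => Finset.sum_nonneg fun a _ =>
      mul_nonneg (mul_nonneg (ih s) (hμ0 s a)) (hP0 s a s')

include hP1 hρ1 hμ1 in
lemma sd_sum_s4 : ∀ t, ∑ s, stateDist P μ ρ t s = 1 := by
  intro t
  induction t with
  | zero => exact hρ1
  | succ t ih =>
    show ∑ s', ∑ s, ∑ a, stateDist P μ ρ t s * μ s a * P s a s' = 1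
    rw [Finset.sum_comm]
    have key : ∀ s, ∑ s', ∑ a, stateDist P μ ρ t s * μ s a * P s a s'
        = stateDist P μ ρ t s := by
      intro s
      rw [Finset.sum_comm]
      have h2 : ∀ a, ∑ s', stateDist P μ ρ t s * μ s a * P s a s'
          = stateDist P μ ρ t s * μ s a := by
        intro a
        rw [← Finset.mul_sum, hP1, mul_one]
      rw [Finset.sum_congr rfl fun a _ => h2 a, ← Finset.mul_sum, hμ1, mul_one]
    rw [Finset.sum_congr rfl fun s _ => key s, ih]

include hP0 hP1 hρ0 hρ1 hμ0 hμ1 in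
lemma sd_le_one (t : ℕ) (s : S) : stateDist P μ ρ t s ≤ 1 := by
  have := sd_sum_s4 P ρ μ hP1 hρ1 hμ1 t
  calc stateDist P μ ρ t s ≤ ∑ s', stateDist P μ ρ t s' :=
        Finset.single_le_sum (fun s' _ => sd_nonneg_s4 P ρ μ hP0 hρ0 hμ0 t s')
          (Finset.mem_univ s)
    _ = 1 := this

include hP0 hP1 hρ0 hρ1 hμ0 hμ1 in
lemma e_abs_le (h : S → ℝ) (M : ℝ) (hM : ∀ s, |h s| ≤ M) (t : ℕ) :
    |∑ s, stateDist P μ ρ t s * h s| ≤ M := by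
  calc |∑ s, stateDist P μ ρ t s * h s| ≤ ∑ s, |stateDist P μ ρ t s * h s| :=
        Finset.abs_sum_le_sum_abs _ _
    _ ≤ ∑ s, stateDist P μ ρ t s * M := by
        apply Finset.sum_le_sum
        intro s _
        rw [abs_mul, abs_of_nonneg (sd_nonneg_s4 P ρ μ hP0 hρ0 hμ0 t s)]
        exact mul_le_mul_of_nonneg_left (hM s) (sd_nonneg_s4 P ρ μ hP0 hρ0 hμ0 t s)
    _ = M := by rw [← Finset.sum_mul, sd_sum_s4 P ρ μ hP1 hρ1 hμ1, one_mul]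

lemma e_succ (h : S → ℝ) (t : ℕ) :
    ∑ s', stateDist P μ ρ (t + 1) s' * h s'
      = ∑ s, stateDist P μ ρ t s * ∑ a, μ s a * ∑ s', P s a s' * h s' := by
  show ∑ s', (∑ s, ∑ a, stateDist P μ ρ t s * μ s a * P s a s') * h s' = _
  simp only [Finset.sum_mul, Finset.mul_sum]
  rw [Finset.sum_comm]
  refine Finset.sum_congr rfl fun s _ => ?_
  rw [Finset.sum_comm]
  refine Finset.sum_congr rfl fun a _ => ?_
  refine Finset.sum_congr rfl fun s' _ => ?_
  ring

include hP0 hP1 hρ0 hρ1 hμ0 hμ1 in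
lemma summable_e {γ : ℝ} (hγ0 : 0 ≤ γ) (hγ1 : γ < 1) (h : S → ℝ) (M : ℝ)
    (hM : ∀ s, |h s| ≤ M) :
    Summable (fun t => γ ^ t * ∑ s, stateDist P μ ρ t s * h s) := by
  apply summable_geom_bound hγ0 hγ1 _ M
  intro t
  rw [abs_mul, abs_pow, abs_of_nonneg hγ0, mul_comm]
  exact mul_le_mul_of_nonneg_right
    (e_abs_le P ρ μ hP0 hP1 hρ0 hρ1 hμ0 hμ1 h M hM t) (pow_nonneg hγ0 t)

include hP0 hP1 hρ0 hρ1 hμ0 hμ1 in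
lemma summable_state {γ : ℝ} (hγ0 : 0 ≤ γ) (hγ1 : γ < 1) (h : S → ℝ) (s : S) :
    Summable (fun t => γ ^ t * stateDist P μ ρ t s * h s) := by
  apply summable_geom_bound hγ0 hγ1 _ |h s|
  intro t
  have hd0 := sd_nonneg_s4 P ρ μ hP0 hρ0 hμ0 t s
  have hd1 := sd_le_one P ρ μ hP0 hP1 hρ0 hρ1 hμ0 hμ1 t s
  rw [abs_mul, abs_mul, abs_pow, abs_of_nonneg hγ0, abs_of_nonneg hd0]
  have hp := pow_nonneg hγ0 t
  calc γ ^ t * stateDist P μ ρ t s * |h s|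
      ≤ γ ^ t * 1 * |h s| :=
        mul_le_mul_of_nonneg_right (mul_le_mul_of_nonneg_left hd1 hp) (abs_nonneg _)
    _ = |h s| * γ ^ t := by ring

include hP0 hP1 hρ0 hρ1 hμ0 hμ1 in
lemma swap_sum {γ : ℝ} (hγ0 : 0 ≤ γ) (hγ1 : γ < 1) (h : S → ℝ) :
    ∑ s, dvisit P μ ρ γ s * h s
      = (1 - γ) * ∑' t : ℕ, γ ^ t * ∑ s, stateDist P μ ρ t s * h s := by
  have per : ∀ s, dvisit P μ ρ γ s * h s
      = (1 - γ) * ∑' t : ℕ, γ ^ t * stateDist P μ ρ t s * h s := by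
    intro s
    rw [dvisit, mul_assoc, ← tsum_mul_right]
  rw [Finset.sum_congr rfl fun s _ => per s, ← Finset.mul_sum]
  congr 1
  rw [← Summable.tsum_finsetSum (fun s _ => summable_state P ρ μ hP0 hP1 hρ0 hρ1 hμ0 hμ1 hγ0 hγ1 h s)]
  refine tsum_congr fun t => ?_
  rw [Finset.mul_sum]
  exact Finset.sum_congr rfl fun s _ => (mul_assoc _ _ _)

include hP0 hP1 hρ0 hρ1 hμ0 hμ1 in
lemma unroll [Nonempty S] {γ : ℝ} (hγ0 : 0 ≤ γ) (hγ1 : γ < 1)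
    (r : S → A → ℝ) (W : S → ℝ)
    (hW : ∀ s, W s = ∑ a, μ s a * (r s a + γ * ∑ s', P s a s' * W s')) :
    ∑' t : ℕ, γ ^ t * ∑ s, stateDist P μ ρ t s * ∑ a, μ s a * r s a
      = ∑ s, ρ s * W s := by
  set MW : ℝ := Finset.univ.sup' Finset.univ_nonempty (fun s => |W s|) with hMW
  have hMWb : ∀ s, |W s| ≤ MW := fun s =>
    Finset.le_sup' (fun s => |W s|) (Finset.mem_univ s)
  set a : ℕ → ℝ := fun t => γ ^ t * ∑ s, stateDist P μ ρ t s * W s with ha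
  have habs : ∀ t, |a t| ≤ MW * γ ^ t := by
    intro t
    rw [ha]
    simp only
    rw [abs_mul, abs_pow, abs_of_nonneg hγ0, mul_comm]
    exact mul_le_mul_of_nonneg_right
      (e_abs_le P ρ μ hP0 hP1 hρ0 hρ1 hμ0 hμ1 W MW hMWb t) (pow_nonneg hγ0 t)
  have hWsplit : ∀ s, W s = (∑ a, μ s a * r s a)
      + γ * ∑ a, μ s a * ∑ s', P s a s' * W s' := by
    intro s
    rw [hW s, Finset.mul_sum, ← Finset.sum_add_distrib]
    refine Finset.sum_congr rfl fun b _ => ?_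
    ring
  have hdiff : ∀ t, a t - a (t + 1)
      = γ ^ t * ∑ s, stateDist P μ ρ t s * ∑ a, μ s a * r s a := by
    intro t
    rw [ha]
    simp only
    rw [e_succ]
    have : ∑ s, stateDist P μ ρ t s * W s
        = (∑ s, stateDist P μ ρ t s * ∑ a, μ s a * r s a)
          + γ * ∑ s, stateDist P μ ρ t s * ∑ a, μ s a * ∑ s', P s a s' * W s' := by
      rw [Finset.mul_sum, ← Finset.sum_add_distrib]
      refine Finset.sum_congr rfl fun s _ => ?_
      calc stateDist P μ ρ t s * W s
          = stateDist P μ ρ t s * ((∑ a, μ s a * r s a)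
              + γ * ∑ a, μ s a * ∑ s', P s a s' * W s') := by rw [← hWsplit s]
        _ = _ := by ring
    rw [this]
    ring
  have h0 : Filter.Tendsto a Filter.atTop (nhds 0) := by
    apply squeeze_zero_norm (fun t => habs t)
    have := (tendsto_pow_atTop_nhds_zero_of_lt_one hγ0 hγ1).const_mul MW
    simpa using this
  have hs : Summable fun t => a t - a (t + 1) := by
    apply summable_geom_bound hγ0 hγ1 _
      (Finset.univ.sup' Finset.univ_nonempty (fun s => |∑ a, μ s a * r s a|))
    intro t
    rw [hdiff t, abs_mul, abs_pow, abs_of_nonneg hγ0, mul_comm]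
    refine mul_le_mul_of_nonneg_right ?_ (pow_nonneg hγ0 t)
    exact e_abs_le P ρ μ hP0 hP1 hρ0 hρ1 hμ0 hμ1 _ _
      (fun s => Finset.le_sup' (f := fun s => |∑ a, μ s a * r s a|) (Finset.mem_univ s)) t
  have := telescope_tsum a h0 hs
  rw [← tsum_congr hdiff, this, ha]
  simp [stateDist, mul_comm]

end Aux

section Two

variable (P : S → A → S → ℝ) (ρ : S → ℝ) (π π' : S → A → ℝ)
variable (hP0 : ∀ s a s', 0 ≤ P s a s') (hP1 : ∀ s a, ∑ s', P s a s' = 1)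
variable (hρ0 : ∀ s, 0 ≤ ρ s) (hρ1 : ∑ s, ρ s = 1)
variable (hπ0 : ∀ s a, 0 ≤ π s a) (hπ1 : ∀ s, ∑ a, π s a = 1)
variable (hπ'0 : ∀ s a, 0 ≤ π' s a) (hπ'1 : ∀ s, ∑ a, π' s a = 1)

include hP0 hP1 hρ0 hπ0 hπ'0 hπ'1 in
lemma delta_rec (t : ℕ) :
    ∑ s', |stateDist P π ρ (t + 1) s' - stateDist P π' ρ (t + 1) s'|
      ≤ (∑ s, |stateDist P π ρ t s - stateDist P π' ρ t s|)
        + ∑ s, stateDist P π ρ t s * ∑ a, |π' s a - π s a| := by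
  have hd0 : ∀ s, 0 ≤ stateDist P π ρ t s := sd_nonneg_s4 P ρ π hP0 hρ0 hπ0 t
  have hterm : ∀ s', |stateDist P π ρ (t + 1) s' - stateDist P π' ρ (t + 1) s'|
      ≤ ∑ s, ∑ a, (stateDist P π ρ t s * |π' s a - π s a|
          + |stateDist P π ρ t s - stateDist P π' ρ t s| * π' s a) * P s a s' := by
    intro s'
    have hexp : stateDist P π ρ (t + 1) s' - stateDist P π' ρ (t + 1) s'
        = ∑ s, ∑ a, (stateDist P π ρ t s * (π s a - π' s a)
            + (stateDist P π ρ t s - stateDist P π' ρ t s) * π' s a) * P s a s' := by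
      show (∑ s, ∑ a, stateDist P π ρ t s * π s a * P s a s')
          - (∑ s, ∑ a, stateDist P π' ρ t s * π' s a * P s a s') = _
      rw [← Finset.sum_sub_distrib]
      refine Finset.sum_congr rfl fun s _ => ?_
      rw [← Finset.sum_sub_distrib]
      refine Finset.sum_congr rfl fun a _ => ?_
      ring
    rw [hexp]
    calc |∑ s, ∑ a, (stateDist P π ρ t s * (π s a - π' s a)
            + (stateDist P π ρ t s - stateDist P π' ρ t s) * π' s a) * P s a s'|
        ≤ ∑ s, |∑ a, (stateDist P π ρ t s * (π s a - π' s a)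
            + (stateDist P π ρ t s - stateDist P π' ρ t s) * π' s a) * P s a s'| :=
          Finset.abs_sum_le_sum_abs _ _
      _ ≤ ∑ s, ∑ a, |(stateDist P π ρ t s * (π s a - π' s a)
            + (stateDist P π ρ t s - stateDist P π' ρ t s) * π' s a) * P s a s'| :=
          Finset.sum_le_sum fun s _ => Finset.abs_sum_le_sum_abs _ _
      _ ≤ _ := by
          refine Finset.sum_le_sum fun s _ => Finset.sum_le_sum fun a _ => ?_
          rw [abs_mul, abs_of_nonneg (hP0 s a s')]
          refine mul_le_mul_of_nonneg_right ?_ (hP0 s a s')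
          calc |stateDist P π ρ t s * (π s a - π' s a)
                + (stateDist P π ρ t s - stateDist P π' ρ t s) * π' s a|
              ≤ |stateDist P π ρ t s * (π s a - π' s a)|
                + |(stateDist P π ρ t s - stateDist P π' ρ t s) * π' s a| := abs_add_le _ _
            _ = stateDist P π ρ t s * |π' s a - π s a|
                + |stateDist P π ρ t s - stateDist P π' ρ t s| * π' s a := by
                rw [abs_mul, abs_mul, abs_of_nonneg (hd0 s), abs_of_nonneg (hπ'0 s a),
                  abs_sub_comm]
  calc ∑ s', |stateDist P π ρ (t + 1) s' - stateDist P π' ρ (t + 1) s'|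
      ≤ ∑ s', ∑ s, ∑ a, (stateDist P π ρ t s * |π' s a - π s a|
          + |stateDist P π ρ t s - stateDist P π' ρ t s| * π' s a) * P s a s' :=
        Finset.sum_le_sum fun s' _ => hterm s'
    _ = ∑ s, ∑ a, (stateDist P π ρ t s * |π' s a - π s a|
          + |stateDist P π ρ t s - stateDist P π' ρ t s| * π' s a) * ∑ s', P s a s' := by
        rw [Finset.sum_comm]
        refine Finset.sum_congr rfl fun s _ => ?_
        rw [Finset.sum_comm]
        refine Finset.sum_congr rfl fun a _ => ?_
        rw [← Finset.mul_sum]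
    _ = ∑ s, ∑ a, (stateDist P π ρ t s * |π' s a - π s a|
          + |stateDist P π ρ t s - stateDist P π' ρ t s| * π' s a) := by
        simp [hP1]
    _ = ∑ s, (stateDist P π ρ t s * ∑ a, |π' s a - π s a|
          + |stateDist P π ρ t s - stateDist P π' ρ t s|) := by
        refine Finset.sum_congr rfl fun s _ => ?_
        rw [Finset.sum_add_distrib, ← Finset.mul_sum, ← Finset.mul_sum, hπ'1 s, mul_one]
    _ = (∑ s, stateDist P π ρ t s * ∑ a, |π' s a - π s a|)
        + ∑ s, |stateDist P π ρ t s - stateDist P π' ρ t s| := Finset.sum_add_distrib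
    _ = _ := add_comm _ _


def cseq (P : S → A → S → ℝ) (ρ : S → ℝ) (π π' : S → A → ℝ) (t : ℕ) : ℝ :=
  ∑ s, stateDist P π ρ t s * ∑ a, |π' s a - π s a|

def dseq (P : S → A → S → ℝ) (ρ : S → ℝ) (π π' : S → A → ℝ) (t : ℕ) : ℝ :=
  ∑ s, |stateDist P π ρ t s - stateDist P π' ρ t s|

def useq (P : S → A → S → ℝ) (ρ : S → ℝ) (π π' : S → A → ℝ) (t : ℕ) : ℝ :=
  ∑ k ∈ Finset.range t, cseq P ρ π π' k

include hP0 hP1 hρ0 hρ1 hπ'0 hπ'1 in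
lemma pdl [Nonempty S] {γ : ℝ} (hγ0 : 0 ≤ γ) (hγ1 : γ < 1) (r : S → A → ℝ)
    (V V' : S → ℝ)
    (hV' : ∀ s, V' s = ∑ a, π' s a * (r s a + γ * ∑ s', P s a s' * V' s')) :
    (1 - γ) * ∑ s, ρ s * V' s
      = (1 - γ) * ∑ s, ρ s * V s
        + ∑ s, dvisit P π' ρ γ s *
            ((∑ a, π' s a * r s a)
              + γ * (∑ a, π' s a * ∑ s', P s a s' * V s') - V s) := by
  classical
  set G : S → ℝ := fun s => (∑ a, π' s a * r s a)
      + γ * (∑ a, π' s a * ∑ s', P s a s' * V s') - V s with hG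
  have hMVb : ∀ s, |V s| ≤ Finset.univ.sup' Finset.univ_nonempty (fun s => |V s|) :=
    fun s => Finset.le_sup' (f := fun s => |V s|) (Finset.mem_univ s)
  set MV := Finset.univ.sup' Finset.univ_nonempty (fun s => |V s|) with hMV
  have hMV0 : 0 ≤ MV := le_trans (abs_nonneg _) (hMVb (Classical.arbitrary S))
  set b : ℕ → ℝ := fun t => γ ^ t * ∑ s, stateDist P π' ρ t s * V s with hb
  have hbabs : ∀ t, |b t| ≤ MV * γ ^ t := by
    intro t
    show |γ ^ t * ∑ s, stateDist P π' ρ t s * V s| ≤ MV * γ ^ t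
    rw [abs_mul, abs_pow, abs_of_nonneg hγ0, mul_comm]
    exact mul_le_mul_of_nonneg_right
      (e_abs_le P ρ π' hP0 hP1 hρ0 hρ1 hπ'0 hπ'1 V MV hMVb t) (pow_nonneg hγ0 t)
  have hb0 : Filter.Tendsto b Filter.atTop (nhds 0) := by
    apply squeeze_zero_norm hbabs
    simpa using (tendsto_pow_atTop_nhds_zero_of_lt_one hγ0 hγ1).const_mul MV
  have hbds : Summable (fun t => b t - b (t + 1)) := by
    apply summable_geom_bound hγ0 hγ1 _ (2 * MV)
    intro t
    have h1 : |b t - b (t + 1)| ≤ |b t| + |b (t + 1)| := by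
      calc |b t - b (t + 1)| = |b t + -(b (t + 1))| := by rw [sub_eq_add_neg]
        _ ≤ |b t| + |-(b (t + 1))| := abs_add_le _ _
        _ = |b t| + |b (t + 1)| := by rw [abs_neg]
    have h2 : γ ^ (t + 1) ≤ γ ^ t := pow_le_pow_of_le_one hγ0 (le_of_lt hγ1) (Nat.le_succ t)
    have h3 := hbabs t
    have h4 := hbabs (t + 1)
    nlinarith
  have htel : ∑' t, (b t - b (t + 1)) = b 0 := telescope_tsum b hb0 hbds
  have hb0val : b 0 = ∑ s, ρ s * V s := by
    show γ ^ 0 * ∑ s, stateDist P π' ρ 0 s * V s = _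
    simp [stateDist, mul_comm]
  have hR : Summable (fun t => γ ^ t * ∑ s, stateDist P π' ρ t s * ∑ a, π' s a * r s a) :=
    summable_e P ρ π' hP0 hP1 hρ0 hρ1 hπ'0 hπ'1 hγ0 hγ1 _
      (Finset.univ.sup' Finset.univ_nonempty (fun s => |∑ a, π' s a * r s a|))
      (fun s => Finset.le_sup' (f := fun s => |∑ a, π' s a * r s a|) (Finset.mem_univ s))
  have hunroll := unroll P ρ π' hP0 hP1 hρ0 hρ1 hπ'0 hπ'1 hγ0 hγ1 r V' hV'
  have hsplit : ∀ t, γ ^ t * ∑ s, stateDist P π' ρ t s * G s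
      = (γ ^ t * ∑ s, stateDist P π' ρ t s * ∑ a, π' s a * r s a) - (b t - b (t + 1)) := by
    intro t
    have h1 : ∑ s, stateDist P π' ρ t s * G s
        = (∑ s, stateDist P π' ρ t s * ∑ a, π' s a * r s a)
          + γ * (∑ s, stateDist P π' ρ t s * ∑ a, π' s a * ∑ s', P s a s' * V s')
          - ∑ s, stateDist P π' ρ t s * V s := by
      simp only [hG]
      rw [Finset.mul_sum, ← Finset.sum_add_distrib, ← Finset.sum_sub_distrib]
      refine Finset.sum_congr rfl fun s _ => ?_
      ring
    rw [h1, ← e_succ P ρ π' V t]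
    show _ = γ ^ t * ∑ s, stateDist P π' ρ t s * ∑ a, π' s a * r s a
      - (γ ^ t * ∑ s, stateDist P π' ρ t s * V s
        - γ ^ (t + 1) * ∑ s, stateDist P π' ρ (t + 1) s * V s)
    ring
  have hkey : ∑' t : ℕ, γ ^ t * ∑ s, stateDist P π' ρ t s * G s
      = ∑ s, ρ s * V' s - ∑ s, ρ s * V s := by
    rw [tsum_congr hsplit, Summable.tsum_sub hR hbds, hunroll, htel, hb0val]
  have hswap := swap_sum P ρ π' hP0 hP1 hρ0 hρ1 hπ'0 hπ'1 hγ0 hγ1 G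
  rw [hswap, hkey]
  ring

include hP0 hP1 hρ0 hρ1 hπ0 hπ1 hπ'0 hπ'1 in
lemma tv_bound [Nonempty S] {γ : ℝ} (hγ0 : 0 ≤ γ) (hγ1 : γ < 1)
    (g : S → ℝ) (ε : ℝ) (hgε : ∀ s, |g s| ≤ ε) :
    ∑ s, dvisit P π ρ γ s * g s - ∑ s, dvisit P π' ρ γ s * g s
      ≤ ε * γ * ∑' t : ℕ, γ ^ t * ∑ s, stateDist P π ρ t s * ∑ a, |π' s a - π s a| := by
  classical
  have hε0 : 0 ≤ ε := le_trans (abs_nonneg _) (hgε (Classical.arbitrary S))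
  have h1γ : (0:ℝ) ≤ 1 - γ := by linarith
  have hd0 : ∀ t s, 0 ≤ stateDist P π ρ t s := sd_nonneg_s4 P ρ π hP0 hρ0 hπ0
  have hd'0 : ∀ t s, 0 ≤ stateDist P π' ρ t s := sd_nonneg_s4 P ρ π' hP0 hρ0 hπ'0
  have hdsum : ∀ t, ∑ s, stateDist P π ρ t s = 1 := sd_sum_s4 P ρ π hP1 hρ1 hπ1
  have hd'sum : ∀ t, ∑ s, stateDist P π' ρ t s = 1 := sd_sum_s4 P ρ π' hP1 hρ1 hπ'1
  have habs2 : ∀ s a, |π' s a - π s a| ≤ π' s a + π s a := by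
    intro s a
    calc |π' s a - π s a| = |π' s a + -(π s a)| := by rw [sub_eq_add_neg]
      _ ≤ |π' s a| + |-(π s a)| := abs_add_le _ _
      _ = π' s a + π s a := by
          rw [abs_neg, abs_of_nonneg (hπ'0 s a), abs_of_nonneg (hπ0 s a)]
  have hdtv2 : ∀ s, ∑ a, |π' s a - π s a| ≤ 2 := by
    intro s
    calc ∑ a, |π' s a - π s a| ≤ ∑ a, (π' s a + π s a) :=
          Finset.sum_le_sum fun a _ => habs2 s a
      _ = 2 := by rw [Finset.sum_add_distrib, hπ'1 s, hπ1 s]; norm_num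
  have hdtv0 : ∀ s, (0:ℝ) ≤ ∑ a, |π' s a - π s a| :=
    fun s => Finset.sum_nonneg fun a _ => abs_nonneg _
  have hc0 : ∀ t, 0 ≤ cseq P ρ π π' t :=
    fun t => Finset.sum_nonneg fun s _ => mul_nonneg (hd0 t s) (hdtv0 s)
  have hc2 : ∀ t, cseq P ρ π π' t ≤ 2 := by
    intro t
    calc cseq P ρ π π' t ≤ ∑ s, stateDist P π ρ t s * 2 :=
          Finset.sum_le_sum fun s _ => mul_le_mul_of_nonneg_left (hdtv2 s) (hd0 t s)
      _ = 2 := by rw [← Finset.sum_mul, hdsum t]; norm_num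
  have hδ0 : ∀ t, 0 ≤ dseq P ρ π π' t :=
    fun t => Finset.sum_nonneg fun s _ => abs_nonneg _
  have hδ2 : ∀ t, dseq P ρ π π' t ≤ 2 := by
    intro t
    calc dseq P ρ π π' t ≤ ∑ s, (stateDist P π ρ t s + stateDist P π' ρ t s) := by
          refine Finset.sum_le_sum fun s _ => ?_
          calc |stateDist P π ρ t s - stateDist P π' ρ t s|
              = |stateDist P π ρ t s + -(stateDist P π' ρ t s)| := by rw [sub_eq_add_neg]
            _ ≤ |stateDist P π ρ t s| + |-(stateDist P π' ρ t s)| := abs_add_le _ _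
            _ = stateDist P π ρ t s + stateDist P π' ρ t s := by
                rw [abs_neg, abs_of_nonneg (hd0 t s), abs_of_nonneg (hd'0 t s)]
      _ = 2 := by rw [Finset.sum_add_distrib, hdsum t, hd'sum t]; norm_num
  have hu0 : ∀ t, 0 ≤ useq P ρ π π' t :=
    fun t => Finset.sum_nonneg fun k _ => hc0 k
  have hu2 : ∀ t, useq P ρ π π' t ≤ 2 * (t : ℝ) := by
    intro t
    calc useq P ρ π π' t ≤ ∑ _k ∈ Finset.range t, (2:ℝ) :=
          Finset.sum_le_sum fun k _ => hc2 k
      _ = 2 * (t : ℝ) := by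
          simp [Finset.sum_const, Finset.card_range, nsmul_eq_mul, mul_comm]
  have hδu : ∀ t, dseq P ρ π π' t ≤ useq P ρ π π' t := by
    intro t
    induction t with
    | zero =>
      show ∑ s, |stateDist P π ρ 0 s - stateDist P π' ρ 0 s| ≤ _
      simp [stateDist, useq]
    | succ t ih =>
      have hrec := delta_rec P ρ π π' hP0 hP1 hρ0 hπ0 hπ'0 hπ'1 t
      calc dseq P ρ π π' (t + 1)
          ≤ dseq P ρ π π' t + cseq P ρ π π' t := hrec
        _ ≤ useq P ρ π π' t + cseq P ρ π π' t := by linarith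
        _ = useq P ρ π π' (t + 1) := by
            show useq P ρ π π' t + cseq P ρ π π' t
              = ∑ k ∈ Finset.range (t + 1), cseq P ρ π π' k
            rw [Finset.sum_range_succ]
            rfl
  have hsum_c : Summable (fun t => γ ^ t * cseq P ρ π π' t) := by
    apply summable_geom_bound hγ0 hγ1 _ 2
    intro t
    rw [abs_mul, abs_pow, abs_of_nonneg hγ0, abs_of_nonneg (hc0 t)]
    calc γ ^ t * cseq P ρ π π' t ≤ γ ^ t * 2 :=
          mul_le_mul_of_nonneg_left (hc2 t) (pow_nonneg hγ0 t)
      _ = 2 * γ ^ t := mul_comm _ _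
  have hsum_δ : Summable (fun t => γ ^ t * dseq P ρ π π' t) := by
    apply summable_geom_bound hγ0 hγ1 _ 2
    intro t
    rw [abs_mul, abs_pow, abs_of_nonneg hγ0, abs_of_nonneg (hδ0 t)]
    calc γ ^ t * dseq P ρ π π' t ≤ γ ^ t * 2 :=
          mul_le_mul_of_nonneg_left (hδ2 t) (pow_nonneg hγ0 t)
      _ = 2 * γ ^ t := mul_comm _ _
  have hsum_u : Summable (fun t => γ ^ t * useq P ρ π π' t) := by
    refine Summable.of_nonneg_of_le
      (fun t => mul_nonneg (pow_nonneg hγ0 t) (hu0 t)) (fun t => ?_)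
      ((summable_pow_mul_geometric_of_norm_lt_one (R := ℝ) 1
        (by rw [Real.norm_eq_abs, abs_of_nonneg hγ0]; exact hγ1)).mul_left 2)
    calc γ ^ t * useq P ρ π π' t ≤ γ ^ t * (2 * (t:ℝ)) :=
          mul_le_mul_of_nonneg_left (hu2 t) (pow_nonneg hγ0 t)
      _ = 2 * ((t:ℝ) ^ 1 * γ ^ t) := by ring
  have hkey : (1 - γ) * (∑' t : ℕ, γ ^ t * useq P ρ π π' t)
      = γ * ∑' t : ℕ, γ ^ t * cseq P ρ π π' t := by
    have husucc : ∀ t : ℕ, γ ^ (t + 1) * useq P ρ π π' (t + 1)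
        = γ * (γ ^ t * useq P ρ π π' t) + γ * (γ ^ t * cseq P ρ π π' t) := by
      intro t
      have h : useq P ρ π π' (t + 1) = useq P ρ π π' t + cseq P ρ π π' t := by
        rw [useq, useq, Finset.sum_range_succ]
      rw [h]; ring
    have hu00 : useq P ρ π π' 0 = 0 := by simp [useq]
    have hstep : (∑' t : ℕ, γ ^ t * useq P ρ π π' t)
        = γ * (∑' t : ℕ, γ ^ t * useq P ρ π π' t)
          + γ * (∑' t : ℕ, γ ^ t * cseq P ρ π π' t) := by
      calc (∑' t : ℕ, γ ^ t * useq P ρ π π' t)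
          = γ ^ 0 * useq P ρ π π' 0 + ∑' t : ℕ, γ ^ (t + 1) * useq P ρ π π' (t + 1) :=
            Summable.tsum_eq_zero_add hsum_u
        _ = ∑' t : ℕ, (γ * (γ ^ t * useq P ρ π π' t) + γ * (γ ^ t * cseq P ρ π π' t)) := by
            rw [hu00, mul_zero, zero_add]
            exact tsum_congr husucc
        _ = γ * (∑' t : ℕ, γ ^ t * useq P ρ π π' t)
            + γ * (∑' t : ℕ, γ ^ t * cseq P ρ π π' t) := by
            rw [Summable.tsum_add (hsum_u.mul_left γ) (hsum_c.mul_left γ),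
              tsum_mul_left, tsum_mul_left]
    linarith
  have habs_sum : ∀ s, Summable (fun t =>
      γ ^ t * |stateDist P π ρ t s - stateDist P π' ρ t s|) := by
    intro s
    apply summable_geom_bound hγ0 hγ1 _ 2
    intro t
    rw [abs_mul, abs_pow, abs_of_nonneg hγ0, abs_abs]
    have h1 : |stateDist P π ρ t s - stateDist P π' ρ t s| ≤ 2 := by
      calc |stateDist P π ρ t s - stateDist P π' ρ t s|
          = |stateDist P π ρ t s + -(stateDist P π' ρ t s)| := by rw [sub_eq_add_neg]
        _ ≤ |stateDist P π ρ t s| + |-(stateDist P π' ρ t s)| := abs_add_le _ _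
        _ = stateDist P π ρ t s + stateDist P π' ρ t s := by
            rw [abs_neg, abs_of_nonneg (hd0 t s), abs_of_nonneg (hd'0 t s)]
        _ ≤ 2 := by
            have := sd_le_one P ρ π hP0 hP1 hρ0 hρ1 hπ0 hπ1 t s
            have := sd_le_one P ρ π' hP0 hP1 hρ0 hρ1 hπ'0 hπ'1 t s
            linarith
    calc γ ^ t * |stateDist P π ρ t s - stateDist P π' ρ t s| ≤ γ ^ t * 2 :=
          mul_le_mul_of_nonneg_left h1 (pow_nonneg hγ0 t)
      _ = 2 * γ ^ t := mul_comm _ _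
  have step3 : ∀ s, |dvisit P π ρ γ s - dvisit P π' ρ γ s|
      ≤ (1 - γ) * ∑' t : ℕ, γ ^ t * |stateDist P π ρ t s - stateDist P π' ρ t s| := by
    intro s
    have hs1 : Summable (fun t => γ ^ t * stateDist P π ρ t s) := by
      apply summable_geom_bound hγ0 hγ1 _ 1
      intro t
      rw [abs_mul, abs_pow, abs_of_nonneg hγ0, abs_of_nonneg (hd0 t s), one_mul]
      calc γ ^ t * stateDist P π ρ t s ≤ γ ^ t * 1 :=
            mul_le_mul_of_nonneg_left (sd_le_one P ρ π hP0 hP1 hρ0 hρ1 hπ0 hπ1 t s)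
              (pow_nonneg hγ0 t)
        _ = γ ^ t := mul_one _
    have hs2 : Summable (fun t => γ ^ t * stateDist P π' ρ t s) := by
      apply summable_geom_bound hγ0 hγ1 _ 1
      intro t
      rw [abs_mul, abs_pow, abs_of_nonneg hγ0, abs_of_nonneg (hd'0 t s), one_mul]
      calc γ ^ t * stateDist P π' ρ t s ≤ γ ^ t * 1 :=
            mul_le_mul_of_nonneg_left (sd_le_one P ρ π' hP0 hP1 hρ0 hρ1 hπ'0 hπ'1 t s)
              (pow_nonneg hγ0 t)
        _ = γ ^ t := mul_one _
    have hΔ : dvisit P π ρ γ s - dvisit P π' ρ γ s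
        = (1 - γ) * ∑' t : ℕ, (γ ^ t * stateDist P π ρ t s
            - γ ^ t * stateDist P π' ρ t s) := by
      rw [dvisit, dvisit, ← mul_sub, Summable.tsum_sub hs1 hs2]
    rw [hΔ, abs_mul, abs_of_nonneg h1γ]
    refine mul_le_mul_of_nonneg_left ?_ h1γ
    have hnorm : Summable (fun t => ‖γ ^ t * stateDist P π ρ t s
        - γ ^ t * stateDist P π' ρ t s‖) := by
      have : (fun t => ‖γ ^ t * stateDist P π ρ t s - γ ^ t * stateDist P π' ρ t s‖)
          = fun t => γ ^ t * |stateDist P π ρ t s - stateDist P π' ρ t s| := by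
        funext t
        rw [Real.norm_eq_abs, ← mul_sub, abs_mul, abs_pow, abs_of_nonneg hγ0]
      rw [this]
      exact habs_sum s
    calc |∑' t : ℕ, (γ ^ t * stateDist P π ρ t s - γ ^ t * stateDist P π' ρ t s)|
        ≤ ∑' t : ℕ, ‖γ ^ t * stateDist P π ρ t s - γ ^ t * stateDist P π' ρ t s‖ := by
          have := norm_tsum_le_tsum_norm hnorm
          rwa [Real.norm_eq_abs] at this
      _ = ∑' t : ℕ, γ ^ t * |stateDist P π ρ t s - stateDist P π' ρ t s| := by
          refine tsum_congr fun t => ?_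
          rw [Real.norm_eq_abs, ← mul_sub, abs_mul, abs_pow, abs_of_nonneg hγ0]
  have step4 : ∑ s, (1 - γ) * ∑' t : ℕ, γ ^ t * |stateDist P π ρ t s - stateDist P π' ρ t s|
      = (1 - γ) * ∑' t : ℕ, γ ^ t * dseq P ρ π π' t := by
    rw [← Finset.mul_sum]
    congr 1
    rw [← Summable.tsum_finsetSum (fun s _ => habs_sum s)]
    refine tsum_congr fun t => ?_
    rw [dseq, Finset.mul_sum]
  have step1 : ∑ s, dvisit P π ρ γ s * g s - ∑ s, dvisit P π' ρ γ s * g s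
      = ∑ s, (dvisit P π ρ γ s - dvisit P π' ρ γ s) * g s := by
    rw [← Finset.sum_sub_distrib]
    exact Finset.sum_congr rfl fun s _ => (sub_mul _ _ _).symm
  have step5 : (∑' t : ℕ, γ ^ t * dseq P ρ π π' t) ≤ ∑' t : ℕ, γ ^ t * useq P ρ π π' t :=
    Summable.tsum_le_tsum (fun t => mul_le_mul_of_nonneg_left (hδu t) (pow_nonneg hγ0 t))
      hsum_δ hsum_u
  have hCc : (∑' t : ℕ, γ ^ t * cseq P ρ π π' t)
      = ∑' t : ℕ, γ ^ t * ∑ s, stateDist P π ρ t s * ∑ a, |π' s a - π s a| :=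
    tsum_congr fun t => by rw [cseq]
  calc ∑ s, dvisit P π ρ γ s * g s - ∑ s, dvisit P π' ρ γ s * g s
      = ∑ s, (dvisit P π ρ γ s - dvisit P π' ρ γ s) * g s := step1
    _ ≤ ∑ s, |dvisit P π ρ γ s - dvisit P π' ρ γ s| * ε := by
        refine Finset.sum_le_sum fun s _ => ?_
        calc (dvisit P π ρ γ s - dvisit P π' ρ γ s) * g s
            ≤ |(dvisit P π ρ γ s - dvisit P π' ρ γ s) * g s| := le_abs_self _
          _ = |dvisit P π ρ γ s - dvisit P π' ρ γ s| * |g s| := abs_mul _ _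
          _ ≤ |dvisit P π ρ γ s - dvisit P π' ρ γ s| * ε :=
              mul_le_mul_of_nonneg_left (hgε s) (abs_nonneg _)
    _ = (∑ s, |dvisit P π ρ γ s - dvisit P π' ρ γ s|) * ε := (Finset.sum_mul _ _ _).symm
    _ ≤ ((1 - γ) * ∑' t : ℕ, γ ^ t * dseq P ρ π π' t) * ε := by
        refine mul_le_mul_of_nonneg_right ?_ hε0
        calc ∑ s, |dvisit P π ρ γ s - dvisit P π' ρ γ s|
            ≤ ∑ s, (1 - γ) * ∑' t : ℕ, γ ^ t *
                |stateDist P π ρ t s - stateDist P π' ρ t s| :=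
              Finset.sum_le_sum fun s _ => step3 s
          _ = (1 - γ) * ∑' t : ℕ, γ ^ t * dseq P ρ π π' t := step4
    _ ≤ ((1 - γ) * ∑' t : ℕ, γ ^ t * useq P ρ π π' t) * ε :=
        mul_le_mul_of_nonneg_right (mul_le_mul_of_nonneg_left step5 h1γ) hε0
    _ = (γ * ∑' t : ℕ, γ ^ t * cseq P ρ π π' t) * ε := by rw [hkey]
    _ = ε * γ * ∑' t : ℕ, γ ^ t * ∑ s, stateDist P π ρ t s * ∑ a, |π' s a - π s a| := by
        rw [← hCc]; ring

end Two

/-- `J(π') ≥ L_π(π') − (2γ ε^π/(1−γ)) · E_{s ~ d^π_ρ}[ D_TV(π'(·|s) ‖ π(·|s)) ]`. -/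
theorem surrogate_lower_bound_policy_tv
    [Nonempty S] [Nonempty A]
    (P : S → A → S → ℝ) (r : S → A → ℝ) (γ : ℝ) (ρ : S → ℝ)
    (hγ0 : 0 ≤ γ) (hγ1 : γ < 1)
    (hP0 : ∀ s a s', 0 ≤ P s a s') (hP1 : ∀ s a, ∑ s', P s a s' = 1)
    (hρ0 : ∀ s, 0 ≤ ρ s) (hρ1 : ∑ s, ρ s = 1)
    (π π' : S → A → ℝ)
    (hπ0 : ∀ s a, 0 ≤ π s a) (hπ1 : ∀ s, ∑ a, π s a = 1)
    (hπ'0 : ∀ s a, 0 ≤ π' s a) (hπ'1 : ∀ s, ∑ a, π' s a = 1)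
    (V V' : S → ℝ)
    (hV : ∀ s, V s = ∑ a, π s a * (r s a + γ * ∑ s', P s a s' * V s'))
    (hV' : ∀ s, V' s = ∑ a, π' s a * (r s a + γ * ∑ s', P s a s' * V' s')) :
    (1 - γ) * ∑ s, ρ s * V' s
      ≥ ((1 - γ) * ∑ s, ρ s * V s
          + ∑ s, dvisit P π ρ γ s *
              ∑ a, π' s a * ((r s a + γ * ∑ s', P s a s' * V s') - V s))
        - (2 * γ * (Finset.univ.sup' Finset.univ_nonempty
              (fun s => |∑ a, π' s a * ((r s a + γ * ∑ s', P s a s' * V s') - V s)|))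
            / (1 - γ))
          * ∑ s, dvisit P π ρ γ s * dTV (π' s) (π s) := by
  classical
  have h1γ : (0:ℝ) < 1 - γ := by linarith
  have hgforms : ∀ s, ∑ a, π' s a * ((r s a + γ * ∑ s', P s a s' * V s') - V s)
      = (∑ a, π' s a * r s a) + γ * (∑ a, π' s a * ∑ s', P s a s' * V s') - V s := by
    intro s
    have expand : ∀ a : A, π' s a * ((r s a + γ * ∑ s', P s a s' * V s') - V s)
        = π' s a * r s a + γ * (π' s a * ∑ s', P s a s' * V s') - π' s a * V s :=
      fun a => by ring
    rw [Finset.sum_congr rfl fun a _ => expand a, Finset.sum_sub_distrib,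
      Finset.sum_add_distrib, ← Finset.mul_sum, ← Finset.sum_mul, hπ'1 s, one_mul]
  have hPDL := pdl P ρ π' hP0 hP1 hρ0 hρ1 hπ'0 hπ'1 hγ0 hγ1 r V V' hV'
  have hPDL' : (1 - γ) * ∑ s, ρ s * V' s
      = (1 - γ) * ∑ s, ρ s * V s
        + ∑ s, dvisit P π' ρ γ s *
            ∑ a, π' s a * ((r s a + γ * ∑ s', P s a s' * V s') - V s) := by
    rw [hPDL]
    congr 1
    refine Finset.sum_congr rfl fun s _ => ?_
    rw [hgforms s]
  have hgε : ∀ s, |∑ a, π' s a * ((r s a + γ * ∑ s', P s a s' * V s') - V s)|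
      ≤ Finset.univ.sup' Finset.univ_nonempty
          (fun s => |∑ a, π' s a * ((r s a + γ * ∑ s', P s a s' * V s') - V s)|) :=
    fun s => Finset.le_sup'
      (f := fun s => |∑ a, π' s a * ((r s a + γ * ∑ s', P s a s' * V s') - V s)|)
      (Finset.mem_univ s)
  set ε := Finset.univ.sup' Finset.univ_nonempty
      (fun s => |∑ a, π' s a * ((r s a + γ * ∑ s', P s a s' * V s') - V s)|) with hεdef
  have hε0 : 0 ≤ ε := le_trans (abs_nonneg _) (hgε (Classical.arbitrary S))
  have htv := tv_bound P ρ π π' hP0 hP1 hρ0 hρ1 hπ0 hπ1 hπ'0 hπ'1 hγ0 hγ1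
      (fun s => ∑ a, π' s a * ((r s a + γ * ∑ s', P s a s' * V s') - V s)) ε hgε
  have hDrepr : ∑ s, dvisit P π ρ γ s * dTV (π' s) (π s)
      = (1 - γ) * ∑' t : ℕ, γ ^ t * ∑ s, stateDist P π ρ t s * ∑ a, |π' s a - π s a| := by
    have h := swap_sum P ρ π hP0 hP1 hρ0 hρ1 hπ0 hπ1 hγ0 hγ1 (fun s => dTV (π' s) (π s))
    simp only [dTV] at h ⊢
    exact h
  have hC0 : 0 ≤ ∑' t : ℕ, γ ^ t * ∑ s, stateDist P π ρ t s * ∑ a, |π' s a - π s a| :=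
    tsum_nonneg fun t => mul_nonneg (pow_nonneg hγ0 t) (Finset.sum_nonneg fun s _ =>
      mul_nonneg (sd_nonneg_s4 P ρ π hP0 hρ0 hπ0 t s)
        (Finset.sum_nonneg fun a _ => abs_nonneg _))
  rw [ge_iff_le, hPDL', hDrepr]
  have hcoef : 2 * γ * ε / (1 - γ)
        * ((1 - γ) * ∑' t : ℕ, γ ^ t * ∑ s, stateDist P π ρ t s * ∑ a, |π' s a - π s a|)
      = 2 * γ * ε * ∑' t : ℕ, γ ^ t * ∑ s, stateDist P π ρ t s * ∑ a, |π' s a - π s a| := by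
    field_simp
  rw [hcoef]
  linarith [htv, mul_nonneg (mul_nonneg hε0 hγ0) hC0]

end
end

section
/- Change-of-variables identity for the off-policy divergence objective: for all policies π and π' of a finite discounted MDP and every function h : ℝ → ℝ, the set { ∑_{s,a} μ^{π'}_ρ(s,a) f(s,a) − ∑_{s,a} μ^π_ρ(s,a) h(f(s,a)) : f : S×A → ℝ } equals the set { (1−γ)·∑_{s∈S} ρ(s) ∑_{a∈A} π'(a|s) g(s,a) − ∑_{s,a} μ^π_ρ(s,a) h( g(s,a) − γ·(P^{π'} g)(s,a) ) : g : S×A → ℝ }; in particular the suprema of the two objectives coincide. -/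
open Finset

noncomputable section

variable {S A : Type*} [Fintype S] [Fintype A]

/-- The operator `P^{π'}` acting on functions `g : S×A → ℝ`. -/
def Pop (P : S → A → S → ℝ) (π' : S → A → ℝ) (g : S → A → ℝ) : S → A → ℝ :=
  fun s a => ∑ s', P s a s' * ∑ a', π' s' a' * g s' a'

section Aux

variable (P : S → A → S → ℝ) (γ : ℝ) (ρ : S → ℝ) (π' : S → A → ℝ)

lemma stateDist_nonneg (hP0 : ∀ s a s', 0 ≤ P s a s') (hρ0 : ∀ s, 0 ≤ ρ s)
    (hπ'0 : ∀ s a, 0 ≤ π' s a) : ∀ t s, 0 ≤ stateDist P π' ρ t s := by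
  intro t
  induction t with
  | zero => exact hρ0
  | succ t ih =>
    intro s'
    apply Finset.sum_nonneg
    intro s _
    exact Finset.sum_nonneg fun a _ => mul_nonneg (mul_nonneg (ih s) (hπ'0 s a)) (hP0 s a s')

lemma stateDist_sum_one (hP1 : ∀ s a, ∑ s', P s a s' = 1) (hρ1 : ∑ s, ρ s = 1)
    (hπ'1 : ∀ s, ∑ a, π' s a = 1) : ∀ t, ∑ s, stateDist P π' ρ t s = 1 := by
  intro t
  induction t with
  | zero => exact hρ1
  | succ t ih =>
    have : ∑ s', stateDist P π' ρ (t + 1) s'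
        = ∑ s, ∑ a, stateDist P π' ρ t s * π' s a * ∑ s', P s a s' := by
      simp only [stateDist]
      rw [Finset.sum_comm]
      congr 1; funext s
      rw [Finset.sum_comm]
      congr 1; funext a
      rw [Finset.mul_sum]
    rw [this]
    simp only [hP1, mul_one]
    calc ∑ s, ∑ a, stateDist P π' ρ t s * π' s a
        = ∑ s, stateDist P π' ρ t s * ∑ a, π' s a := by
          congr 1; funext s; rw [Finset.mul_sum]
      _ = 1 := by simp only [hπ'1, mul_one, ih]

lemma stateDist_le_one (hP0 : ∀ s a s', 0 ≤ P s a s') (hP1 : ∀ s a, ∑ s', P s a s' = 1)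
    (hρ0 : ∀ s, 0 ≤ ρ s) (hρ1 : ∑ s, ρ s = 1)
    (hπ'0 : ∀ s a, 0 ≤ π' s a) (hπ'1 : ∀ s, ∑ a, π' s a = 1) :
    ∀ t s, stateDist P π' ρ t s ≤ 1 := by
  intro t s
  calc stateDist P π' ρ t s
      ≤ ∑ s', stateDist P π' ρ t s' :=
        Finset.single_le_sum (fun s' _ => stateDist_nonneg P ρ π' hP0 hρ0 hπ'0 t s')
          (Finset.mem_univ s)
    _ = 1 := stateDist_sum_one P ρ π' hP1 hρ1 hπ'1 t

lemma step_shift (dd : S → ℝ) (g : S → A → ℝ) :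
    ∑ s, dd s * ∑ a, π' s a * Pop P π' g s a
      = ∑ s', (∑ s, ∑ a, dd s * π' s a * P s a s') * ∑ a', π' s' a' * g s' a' := by
  calc ∑ s, dd s * ∑ a, π' s a * Pop P π' g s a
      = ∑ s, ∑ a, ∑ s', dd s * π' s a * (P s a s' * ∑ a', π' s' a' * g s' a') := by
        refine Finset.sum_congr rfl fun s _ => ?_
        rw [Finset.mul_sum]
        refine Finset.sum_congr rfl fun a _ => ?_
        rw [Pop, Finset.mul_sum, Finset.mul_sum]
        exact Finset.sum_congr rfl fun s' _ => by ring
    _ = ∑ s, ∑ s', ∑ a, dd s * π' s a * (P s a s' * ∑ a', π' s' a' * g s' a') :=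
        Finset.sum_congr rfl fun s _ => Finset.sum_comm
    _ = ∑ s', ∑ s, ∑ a, dd s * π' s a * (P s a s' * ∑ a', π' s' a' * g s' a') :=
        Finset.sum_comm
    _ = ∑ s', (∑ s, ∑ a, dd s * π' s a * P s a s') * ∑ a', π' s' a' * g s' a' := by
        refine Finset.sum_congr rfl fun s' _ => ?_
        rw [Finset.sum_mul]
        refine Finset.sum_congr rfl fun s _ => ?_
        rw [Finset.sum_mul]
        exact Finset.sum_congr rfl fun a _ => by ring

lemma per_step (dd : S → ℝ) (g : S → A → ℝ) :
    ∑ s, dd s * ∑ a, π' s a * (g s a - γ * Pop P π' g s a)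
      = (∑ s, dd s * ∑ a, π' s a * g s a)
        - γ * ∑ s', (∑ s, ∑ a, dd s * π' s a * P s a s') * ∑ a', π' s' a' * g s' a' := by
  have e : ∀ s, dd s * ∑ a, π' s a * (g s a - γ * Pop P π' g s a)
      = dd s * ∑ a, π' s a * g s a - γ * (dd s * ∑ a, π' s a * Pop P π' g s a) := by
    intro s
    rw [Finset.mul_sum, Finset.mul_sum, Finset.mul_sum, Finset.mul_sum,
      ← Finset.sum_sub_distrib]
    exact Finset.sum_congr rfl fun a _ => by ring
  simp only [e]
  rw [Finset.sum_sub_distrib, ← Finset.mul_sum, step_shift]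

set_option maxHeartbeats 1000000 in
/-- The Bellman-flow identity for the visitation distribution. -/
lemma dvisit_bellman (hγ0 : 0 ≤ γ) (hγ1 : γ < 1)
    (hP0 : ∀ s a s', 0 ≤ P s a s') (hP1 : ∀ s a, ∑ s', P s a s' = 1)
    (hρ0 : ∀ s, 0 ≤ ρ s) (hρ1 : ∑ s, ρ s = 1)
    (hπ'0 : ∀ s a, 0 ≤ π' s a) (hπ'1 : ∀ s, ∑ a, π' s a = 1)
    (g : S → A → ℝ) :
    ∑ s, ∑ a, (dvisit P π' ρ γ s * π' s a) * (g s a - γ * Pop P π' g s a)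
      = (1 - γ) * ∑ s, ρ s * ∑ a, π' s a * g s a := by
  set d := stateDist P π' ρ with hd
  have hd0 : ∀ t s, 0 ≤ d t s := stateDist_nonneg P ρ π' hP0 hρ0 hπ'0
  have hd1 : ∀ t s, d t s ≤ 1 := stateDist_le_one P ρ π' hP0 hP1 hρ0 hρ1 hπ'0 hπ'1
  set F : ℕ → ℝ := fun t => ∑ s, d t s * ∑ a, π' s a * g s a with hF
  -- summability facts
  have hsum : ∀ (u : S → ℝ) (s : S), Summable (fun t : ℕ => γ ^ t * d t s * u s) := by
    intro u s
    apply Summable.of_norm_bounded (g := fun t => γ ^ t * |u s|)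
      ((summable_geometric_of_lt_one hγ0 hγ1).mul_right _)
    intro t
    rw [Real.norm_eq_abs, abs_mul, abs_mul, abs_of_nonneg (pow_nonneg hγ0 t),
      abs_of_nonneg (hd0 t s)]
    calc γ ^ t * d t s * |u s|
        ≤ γ ^ t * 1 * |u s| :=
          mul_le_mul_of_nonneg_right
            (mul_le_mul_of_nonneg_left (hd1 t s) (pow_nonneg hγ0 t)) (abs_nonneg _)
      _ = γ ^ t * |u s| := by ring
  have hFsum : Summable (fun t => γ ^ t * F t) := by
    apply Summable.of_norm_bounded (g := fun t => γ ^ t * ∑ s, |∑ a, π' s a * g s a|)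
      ((summable_geometric_of_lt_one hγ0 hγ1).mul_right _)
    intro t
    rw [Real.norm_eq_abs, abs_mul, abs_of_nonneg (pow_nonneg hγ0 t)]
    apply mul_le_mul_of_nonneg_left _ (pow_nonneg hγ0 t)
    calc |F t| ≤ ∑ s, |d t s * ∑ a, π' s a * g s a| := Finset.abs_sum_le_sum_abs _ _
      _ ≤ ∑ s, |∑ a, π' s a * g s a| := by
          apply Finset.sum_le_sum
          intro s _
          rw [abs_mul, abs_of_nonneg (hd0 t s)]
          calc d t s * |∑ a, π' s a * g s a|
              ≤ 1 * |∑ a, π' s a * g s a| :=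
                mul_le_mul_of_nonneg_right (hd1 t s) (abs_nonneg _)
            _ = |∑ a, π' s a * g s a| := one_mul _
  -- Step 1: rewrite LHS into a tsum
  have step1 : ∑ s, ∑ a, (dvisit P π' ρ γ s * π' s a) * (g s a - γ * Pop P π' g s a)
      = (1 - γ) * ∑' t : ℕ, γ ^ t
          * ∑ s, d t s * ∑ a, π' s a * (g s a - γ * Pop P π' g s a) := by
    have e1 : ∀ s, ∑ a, (dvisit P π' ρ γ s * π' s a) * (g s a - γ * Pop P π' g s a)
        = ∑' t : ℕ, (1 - γ) * (γ ^ t * d t s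
            * ∑ a, π' s a * (g s a - γ * Pop P π' g s a)) := by
      intro s
      rw [tsum_mul_left, tsum_mul_right]
      calc ∑ a, (dvisit P π' ρ γ s * π' s a) * (g s a - γ * Pop P π' g s a)
          = dvisit P π' ρ γ s * ∑ a, π' s a * (g s a - γ * Pop P π' g s a) := by
            rw [Finset.mul_sum]
            exact Finset.sum_congr rfl fun a _ => by ring
        _ = (1 - γ) * ((∑' t : ℕ, γ ^ t * d t s)
              * ∑ a, π' s a * (g s a - γ * Pop P π' g s a)) := by
            rw [dvisit, ← hd, mul_assoc]
    simp only [e1]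
    rw [← Summable.tsum_finsetSum (fun s _ =>
      ((hsum (fun s => ∑ a, π' s a * (g s a - γ * Pop P π' g s a)) s).mul_left (1 - γ))),
      ← tsum_mul_left]
    refine tsum_congr fun t => ?_
    rw [Finset.mul_sum, Finset.mul_sum]
    exact Finset.sum_congr rfl fun s _ => by ring
  -- Step 2: per-step telescoping
  have hrec : ∀ t s', d (t + 1) s' = ∑ s, ∑ a, d t s * π' s a * P s a s' := by
    intro t s'
    rw [hd]
    simp only [stateDist]
  have step2 : ∀ t : ℕ, ∑ s, d t s * ∑ a, π' s a * (g s a - γ * Pop P π' g s a)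
      = F t - γ * F (t + 1) := by
    intro t
    rw [per_step]
    simp only [hF]
    have e : ∀ s' : S, (∑ s, ∑ a, d t s * π' s a * P s a s') * (∑ a', π' s' a' * g s' a')
        = d (t + 1) s' * ∑ a', π' s' a' * g s' a' := by
      intro s'
      rw [hrec]
    rw [Finset.sum_congr rfl fun s' _ => e s']
  -- Step 3: telescoping tsum
  rw [step1]
  simp only [step2]
  have hshift : Summable (fun t : ℕ => γ ^ (t + 1) * F (t + 1)) :=
    (summable_nat_add_iff 1).2 hFsum
  have e3 : (fun t : ℕ => γ ^ t * (F t - γ * F (t + 1)))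
      = fun t : ℕ => γ ^ t * F t - γ ^ (t + 1) * F (t + 1) := by
    funext t; ring
  rw [e3, Summable.tsum_sub hFsum hshift]
  have e4 : ∑' t : ℕ, γ ^ (t + 1) * F (t + 1) = (∑' t : ℕ, γ ^ t * F t) - γ ^ 0 * F 0 := by
    have := Summable.tsum_eq_zero_add hFsum
    linarith [this]
  rw [e4, sub_sub_cancel]
  have e5 : γ ^ 0 * F 0 = ∑ s, ρ s * ∑ a, π' s a * g s a := by
    simp [hF, hd, stateDist]
  rw [e5]

lemma Pop_add (g g' : S → A → ℝ) : Pop P π' (g + g') = Pop P π' g + Pop P π' g' := by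
  funext s a
  simp only [Pop, Pi.add_apply, mul_add, Finset.mul_sum, Finset.sum_add_distrib]

lemma Pop_smul (r : ℝ) (g : S → A → ℝ) : Pop P π' (r • g) = r • Pop P π' g := by
  funext s a
  simp only [Pop, Pi.smul_apply, smul_eq_mul, Finset.mul_sum]
  exact Finset.sum_congr rfl fun s' _ => Finset.sum_congr rfl fun a' _ => by ring

lemma Pop_bound (hP0 : ∀ s a s', 0 ≤ P s a s') (hP1 : ∀ s a, ∑ s', P s a s' = 1)
    (hπ'0 : ∀ s a, 0 ≤ π' s a) (hπ'1 : ∀ s, ∑ a, π' s a = 1)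
    (g : S → A → ℝ) (M : ℝ) (hM : ∀ s a, |g s a| ≤ M) (s : S) (a : A) :
    |Pop P π' g s a| ≤ M := by
  calc |Pop P π' g s a| ≤ ∑ s', |P s a s' * ∑ a', π' s' a' * g s' a'| :=
        Finset.abs_sum_le_sum_abs _ _
    _ ≤ ∑ s', P s a s' * M := by
        apply Finset.sum_le_sum
        intro s' _
        rw [abs_mul, abs_of_nonneg (hP0 s a s')]
        apply mul_le_mul_of_nonneg_left _ (hP0 s a s')
        calc |∑ a', π' s' a' * g s' a'| ≤ ∑ a', |π' s' a' * g s' a'| :=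
              Finset.abs_sum_le_sum_abs _ _
          _ ≤ ∑ a', π' s' a' * M := by
              apply Finset.sum_le_sum
              intro a' _
              rw [abs_mul, abs_of_nonneg (hπ'0 s' a')]
              exact mul_le_mul_of_nonneg_left (hM s' a') (hπ'0 s' a')
          _ = M := by rw [← Finset.sum_mul, hπ'1, one_mul]
    _ = M := by rw [← Finset.sum_mul, hP1, one_mul]

end Aux

/-- Change-of-variables identity for the off-policy divergence objective: the ranges of
the two objectives (over `f` and over `g`) coincide, and in particular so do
their suprema. -/
theorem dualdice_change_of_variables
    [Nonempty S] [Nonempty A]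
    (P : S → A → S → ℝ) (γ : ℝ) (ρ : S → ℝ)
    (hγ0 : 0 ≤ γ) (hγ1 : γ < 1)
    (hP0 : ∀ s a s', 0 ≤ P s a s') (hP1 : ∀ s a, ∑ s', P s a s' = 1)
    (hρ0 : ∀ s, 0 ≤ ρ s) (hρ1 : ∑ s, ρ s = 1)
    (π π' : S → A → ℝ)
    (hπ0 : ∀ s a, 0 ≤ π s a) (hπ1 : ∀ s, ∑ a, π s a = 1)
    (hπ'0 : ∀ s a, 0 ≤ π' s a) (hπ'1 : ∀ s, ∑ a, π' s a = 1)
    (h : ℝ → ℝ) :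
    (Set.range (fun f : S → A → ℝ =>
        (∑ s, ∑ a, (dvisit P π' ρ γ s * π' s a) * f s a)
          - ∑ s, ∑ a, (dvisit P π ρ γ s * π s a) * h (f s a))
      = Set.range (fun g : S → A → ℝ =>
        ((1 - γ) * ∑ s, ρ s * ∑ a, π' s a * g s a)
          - ∑ s, ∑ a, (dvisit P π ρ γ s * π s a) * h (g s a - γ * Pop P π' g s a)))
    ∧ sSup (Set.range (fun f : S → A → ℝ =>
        (∑ s, ∑ a, (dvisit P π' ρ γ s * π' s a) * f s a)
          - ∑ s, ∑ a, (dvisit P π ρ γ s * π s a) * h (f s a)))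
      = sSup (Set.range (fun g : S → A → ℝ =>
        ((1 - γ) * ∑ s, ρ s * ∑ a, π' s a * g s a)
          - ∑ s, ∑ a, (dvisit P π ρ γ s * π s a) * h (g s a - γ * Pop P π' g s a))) := by
  classical
  -- the linear operator g ↦ g - γ • P^{π'} g
  set T : (S → A → ℝ) →ₗ[ℝ] (S → A → ℝ) :=
    { toFun := fun g => fun s a => g s a - γ * Pop P π' g s a
      map_add' := by
        intro g g'
        funext s a
        show (g + g') s a - γ * Pop P π' (g + g') s a
          = (g s a - γ * Pop P π' g s a) + (g' s a - γ * Pop P π' g' s a)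
        rw [Pop_add]
        simp only [Pi.add_apply]
        ring
      map_smul' := by
        intro r g
        funext s a
        show (r • g) s a - γ * Pop P π' (r • g) s a
          = r * (g s a - γ * Pop P π' g s a)
        rw [Pop_smul]
        simp only [Pi.smul_apply, smul_eq_mul]
        ring } with hT
  have hTapp : ∀ (g : S → A → ℝ) (s : S) (a : A),
      T g s a = g s a - γ * Pop P π' g s a := fun _ _ _ => rfl
  -- T is injective
  have hTinj : Function.Injective T := by
    rw [injective_iff_map_eq_zero]
    intro g hg
    have hg' : ∀ s a, g s a = γ * Pop P π' g s a := by
      intro s a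
      have := congrFun (congrFun hg s) a
      rw [hTapp] at this
      simp only [Pi.zero_apply] at this
      linarith
    obtain ⟨⟨s₀, a₀⟩, -, hmax⟩ := Finset.exists_max_image Finset.univ
      (fun p : S × A => |g p.1 p.2|) ⟨(Classical.arbitrary S, Classical.arbitrary A),
        Finset.mem_univ _⟩
    have hM : ∀ s a, |g s a| ≤ |g s₀ a₀| := fun s a => hmax (s, a) (Finset.mem_univ _)
    have hb := Pop_bound P π' hP0 hP1 hπ'0 hπ'1 g (|g s₀ a₀|) hM s₀ a₀
    have : |g s₀ a₀| ≤ γ * |g s₀ a₀| := by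
      calc |g s₀ a₀| = γ * |Pop P π' g s₀ a₀| := by
            rw [hg' s₀ a₀, abs_mul, abs_of_nonneg hγ0]
        _ ≤ γ * |g s₀ a₀| := mul_le_mul_of_nonneg_left hb hγ0
    have h0 : |g s₀ a₀| ≤ 0 := by nlinarith [abs_nonneg (g s₀ a₀)]
    funext s a
    have : |g s a| ≤ 0 := le_trans (hM s a) h0
    simpa using le_antisymm this (abs_nonneg _)
  have hTsurj : Function.Surjective T := LinearMap.injective_iff_surjective.mp hTinj
  -- the two objectives
  set objf : (S → A → ℝ) → ℝ := fun f =>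
    (∑ s, ∑ a, (dvisit P π' ρ γ s * π' s a) * f s a)
      - ∑ s, ∑ a, (dvisit P π ρ γ s * π s a) * h (f s a) with hobjf
  set objg : (S → A → ℝ) → ℝ := fun g =>
    ((1 - γ) * ∑ s, ρ s * ∑ a, π' s a * g s a)
      - ∑ s, ∑ a, (dvisit P π ρ γ s * π s a) * h (g s a - γ * Pop P π' g s a) with hobjg
  have hcomp : objf ∘ T = objg := by
    funext g
    simp only [Function.comp_apply, hobjf, hobjg, hTapp]
    rw [dvisit_bellman P γ ρ π' hγ0 hγ1 hP0 hP1 hρ0 hρ1 hπ'0 hπ'1 g]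
  have hrange : Set.range objf = Set.range objg := by
    rw [← hcomp]
    exact (hTsurj.range_comp objf).symm
  exact ⟨hrange, by rw [hrange]⟩
end
end
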